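/- (Proposition 1) In the M-RA construction, the M-RA covariance C_M is a valid (nonnegative definite) covariance function: C_M(s,t) = C_M(t,s) for all s,t ∈ D, and for every finite collection of points s₁,…,sₙ ∈ D and reals c₁,…,cₙ one has ∑_{i,j} cᵢ cⱼ C_M(sᵢ,sⱼ) ≥ 0. -/

import Mathlib

open scoped BigOperators Matrix
open Matrix

namespace MRAaux

lemma quad_expand {ι : Type} [Fintype ι] (N : Matrix ι ι ℝ) (c : ι → ℝ) :
    c ⬝ᵥ N *ᵥ c = ∑ a, ∑ b, c a * c b * N a b := by
  simp only [dotProduct, Matrix.mulVec, Finset.mul_sum]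
  exact Finset.sum_congr rfl fun a _ => Finset.sum_congr rfl fun b _ => by ring

lemma psd_fintype {D : Type*} {k : D → D → ℝ}
    (h : ∀ (n : ℕ) (s : Fin n → D) (c : Fin n → ℝ),
      0 ≤ ∑ i, ∑ j, c i * c j * k (s i) (s j))
    (ι : Type) [Fintype ι] (s : ι → D) (c : ι → ℝ) :
    0 ≤ ∑ a, ∑ b, c a * c b * k (s a) (s b) := by
  classical
  let e := Fintype.equivFin ι
  have h0 := h (Fintype.card ι) (s ∘ e.symm) (c ∘ e.symm)
  have h1 : ∀ a : ι, ∑ j : Fin (Fintype.card ι),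
      c a * c (e.symm j) * k (s a) (s (e.symm j)) = ∑ b, c a * c b * k (s a) (s b) :=
    fun a => Equiv.sum_comp e.symm (fun b => c a * c b * k (s a) (s b))
  have h2 : ∑ i : Fin (Fintype.card ι), (∑ b, c (e.symm i) * c b * k (s (e.symm i)) (s b))
      = ∑ a, ∑ b, c a * c b * k (s a) (s b) :=
    Equiv.sum_comp e.symm (fun a => ∑ b, c a * c b * k (s a) (s b))
  calc (0:ℝ) ≤ ∑ i, ∑ j, (c ∘ e.symm) i * (c ∘ e.symm) j
        * k ((s ∘ e.symm) i) ((s ∘ e.symm) j) := h0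
    _ = ∑ a, ∑ b, c a * c b * k (s a) (s b) := by
        rw [← h2]
        exact Finset.sum_congr rfl fun i _ => h1 (e.symm i)

lemma dot_symm {r : ℕ} (H : Matrix (Fin r) (Fin r) ℝ) (hH : Hᵀ = H) (x y : Fin r → ℝ) :
    x ⬝ᵥ H *ᵥ y = y ⬝ᵥ H *ᵥ x := by
  rw [Matrix.dotProduct_mulVec]
  nth_rewrite 1 [← hH]
  rw [Matrix.vecMul_transpose, dotProduct_comm]

lemma psd_quad {r : ℕ} (H : Matrix (Fin r) (Fin r) ℝ) (hH : H.PosSemidef)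
    (ι : Type) [Fintype ι] (φ : ι → Fin r → ℝ) (c : ι → ℝ) :
    0 ≤ ∑ a, ∑ b, c a * c b * (φ a ⬝ᵥ H *ᵥ φ b) := by
  classical
  set Φ : Matrix ι (Fin r) ℝ := Matrix.of φ with hΦ
  have hN : (Φ * H * Φᴴ).PosSemidef := hH.mul_mul_conjTranspose_same Φ
  have h0 := hN.dotProduct_mulVec_nonneg c
  rw [star_trivial, quad_expand] at h0
  have hent : ∀ a b, (Φ * H * Φᴴ) a b = φ a ⬝ᵥ H *ᵥ φ b := by
    intro a b
    simp only [Matrix.mul_apply, Matrix.conjTranspose_apply, star_trivial,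
      Matrix.mulVec, dotProduct, Matrix.of_apply, Finset.sum_mul, Finset.mul_sum, hΦ]
    rw [Finset.sum_comm]
    exact Finset.sum_congr rfl fun j _ => Finset.sum_congr rfl fun l _ => by ring
  calc (0:ℝ) ≤ ∑ a, ∑ b, c a * c b * (Φ * H * Φᴴ) a b := h0
    _ = _ := Finset.sum_congr rfl fun a _ => Finset.sum_congr rfl fun b _ => by rw [hent]

lemma group_sum {ι : Type} [Fintype ι] {J : Type*} [DecidableEq J]
    (β : ι → J) (c : ι → ℝ) (w : ι → ι → ℝ)
    (hw : ∀ a b, β a ≠ β b → w a b = 0) :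
    ∑ a, ∑ b, c a * c b * w a b =
      ∑ B ∈ Finset.univ.image β, ∑ a, ∑ b,
        (if β a = B then c a else 0) * (if β b = B then c b else 0) * w a b := by
  classical
  have key : ∀ a b, c a * c b * w a b
      = ∑ B ∈ Finset.univ.image β,
          (if β a = B then c a else 0) * (if β b = B then c b else 0) * w a b := by
    intro a b
    rw [Finset.sum_eq_single (β a)]
    · by_cases h : β b = β a
      · simp [h]
      · simp [Ne.symm h, hw a b (fun hh => h hh.symm)]
    · intro B _ hB; simp [Ne.symm hB]
    · intro h; exact absurd (Finset.mem_image_of_mem β (Finset.mem_univ a)) h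
  calc ∑ a, ∑ b, c a * c b * w a b
      = ∑ a, ∑ B ∈ Finset.univ.image β, ∑ b,
          (if β a = B then c a else 0) * (if β b = B then c b else 0) * w a b := by
        refine Finset.sum_congr rfl fun a _ => ?_
        rw [← Finset.sum_comm]
        exact Finset.sum_congr rfl fun b _ => key a b
    _ = _ := Finset.sum_comm

lemma schur_psd {D : Type*} {r : ℕ} (k : D → D → ℝ)
    (hsym : ∀ s t, k s t = k t s)
    (hpsd : ∀ (ι : Type) [Fintype ι] (s : ι → D) (c : ι → ℝ),
      0 ≤ ∑ a, ∑ b, c a * c b * k (s a) (s b))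
    (q : Fin r → D) (Gm : Matrix (Fin r) (Fin r) ℝ)
    (hGm : ∀ j l, Gm j l = k (q j) (q l)) (hGpd : Gm.PosDef)
    (ι : Type) [Fintype ι] (s : ι → D) (c : ι → ℝ) :
    0 ≤ ∑ a, ∑ b, c a * c b *
      (k (s a) (s b) - (fun j => k (s a) (q j)) ⬝ᵥ Gm⁻¹ *ᵥ (fun j => k (s b) (q j))) := by
  classical
  letI := hGpd.isUnit.invertible
  set Bm : Matrix (Fin r) ι ℝ := Matrix.of (fun j a => k (q j) (s a)) with hBm
  set A : Matrix ι ι ℝ := Matrix.of (fun a b => k (s a) (s b)) with hA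
  have hMeq : Matrix.fromBlocks Gm Bm Bmᴴ A
      = Matrix.of (fun i j => k (Sum.elim q s i) (Sum.elim q s j)) := by
    ext i j
    cases i <;> cases j <;>
      simp [hBm, hA, hGm, Matrix.fromBlocks, Matrix.conjTranspose_apply, hsym]
  have hbig : (Matrix.fromBlocks Gm Bm Bmᴴ A).PosSemidef := by
    refine Matrix.PosSemidef.of_dotProduct_mulVec_nonneg ?_ ?_
    · rw [hMeq]
      ext i j
      simp [Matrix.conjTranspose_apply, hsym (Sum.elim q s j) (Sum.elim q s i)]
    · intro x
      rw [star_trivial, quad_expand, hMeq]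
      exact hpsd (Fin r ⊕ ι) (Sum.elim q s) x
  have hschur := (Matrix.PosDef.fromBlocks₁₁ Bm A hGpd).mp hbig
  have h2 := hschur.dotProduct_mulVec_nonneg c
  rw [star_trivial, quad_expand] at h2
  have hent : ∀ a b, (A - Bmᴴ * Gm⁻¹ * Bm) a b
      = k (s a) (s b) - (fun j => k (s a) (q j)) ⬝ᵥ Gm⁻¹ *ᵥ (fun j => k (s b) (q j)) := by
    intro a b
    have hquad : (Bmᴴ * Gm⁻¹ * Bm) a b
        = (fun j => k (s a) (q j)) ⬝ᵥ Gm⁻¹ *ᵥ (fun j => k (s b) (q j)) := by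
      simp only [Matrix.mul_apply, Matrix.conjTranspose_apply, star_trivial,
        Matrix.mulVec, dotProduct, Matrix.of_apply, Finset.sum_mul, Finset.mul_sum, hBm]
      rw [Finset.sum_comm]
      refine Finset.sum_congr rfl fun j _ => Finset.sum_congr rfl fun l _ => ?_
      rw [hsym (q j) (s a), hsym (q l) (s b)]; ring
    rw [Matrix.sub_apply, hquad]; simp [hA]
  calc (0:ℝ) ≤ ∑ a, ∑ b, c a * c b * (A - Bmᴴ * Gm⁻¹ * Bm) a b := h2
    _ = _ := Finset.sum_congr rfl fun a _ => Finset.sum_congr rfl fun b _ => by rw [hent]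

end MRAaux

open MRAaux

/-- Proposition 1: The M-RA covariance `C_M` is a valid
(nonnegative definite) covariance function. -/
theorem MRA_covariance_posSemidef
    {D : Type*} {I : ℕ → Type*} [∀ m, DecidableEq (I m)]
    (C₀ : D → D → ℝ)
    (hC₀symm : ∀ s t, C₀ s t = C₀ t s)
    (hC₀psd : ∀ (n : ℕ) (s : Fin n → D) (c : Fin n → ℝ),
      0 ≤ ∑ i, ∑ j, c i * c j * C₀ (s i) (s j))
    (M r : ℕ) (hM : 1 ≤ M) (hr : 1 ≤ r)
    (p : ∀ m : ℕ, D → I m)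
    (hp0 : ∀ s t, p 0 s = p 0 t)
    (hnested : ∀ m < M, ∃ f : I (m + 1) → I m, ∀ s, p m s = f (p (m + 1) s))
    (Q : ∀ m : ℕ, I m → Fin r → D)
    (hQ : ∀ m < M, ∀ (i : I m) (k : Fin r), p m (Q m i k) = i)
    (v : ℕ → D → D → ℝ)
    (hv0 : ∀ s t, v 0 s t = C₀ s t)
    (b : ℕ → D → Fin r → ℝ)
    (hb : ∀ m < M, ∀ (s : D) (k : Fin r), b m s k = v m s (Q m (p m s) k))
    (G : ∀ m : ℕ, I m → Matrix (Fin r) (Fin r) ℝ)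
    (hG : ∀ m < M, ∀ (i : I m) (k l : Fin r), G m i k l = v m (Q m i k) (Q m i l))
    (hGpd : ∀ m < M, ∀ i : I m, (G m i).PosDef)
    (K : ∀ m : ℕ, I m → Matrix (Fin r) (Fin r) ℝ)
    (hK : ∀ m < M, ∀ i : I m, K m i = (G m i)⁻¹)
    (hvrec : ∀ m < M, ∀ s t : D, p (m + 1) s = p (m + 1) t →
      v (m + 1) s t = v m s t - b m s ⬝ᵥ (K m (p m s)).mulVec (b m t))
    (hvzero : ∀ m < M, ∀ s t : D, p (m + 1) s ≠ p (m + 1) t →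
      v (m + 1) s t = 0)
    (CM : D → D → ℝ)
    (hCM : ∀ s t : D, CM s t =
      (∑ m ∈ Finset.range M,
        if p m s = p m t then b m s ⬝ᵥ (K m (p m s)).mulVec (b m t) else 0)
      + v M s t) :
    (∀ s t, CM s t = CM t s) ∧
    (∀ (n : ℕ) (s : Fin n → D) (c : Fin n → ℝ),
      0 ≤ ∑ i, ∑ j, c i * c j * CM (s i) (s j)) := by
  classical
  -- transpose symmetry of `G` and `K` at level `m`, given symmetry of `v m`
  have hGsym : ∀ m, m < M → (∀ s t, v m s t = v m t s) →
      ∀ i : I m, (G m i)ᵀ = G m i := by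
    intro m hm hs i
    ext j l
    rw [Matrix.transpose_apply, hG m hm i j l, hG m hm i l j, hs]
  have hKsym : ∀ m, m < M → (∀ s t, v m s t = v m t s) →
      ∀ i : I m, (K m i)ᵀ = K m i := by
    intro m hm hs i
    rw [hK m hm i, Matrix.transpose_nonsing_inv, hGsym m hm hs i]
  -- main induction: each `v m` (m ≤ M) is symmetric and PSD
  have main : ∀ m, m ≤ M → (∀ s t, v m s t = v m t s) ∧
      (∀ (ι : Type) [Fintype ι] (s : ι → D) (c : ι → ℝ),
        0 ≤ ∑ a, ∑ b, c a * c b * v m (s a) (s b)) := by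
    intro m
    induction m with
    | zero =>
      intro _
      refine ⟨fun s t => by rw [hv0, hv0, hC₀symm], ?_⟩
      intro ι _ s c
      simp only [hv0]
      exact psd_fintype hC₀psd ι s c
    | succ m ih =>
      intro hm1
      have hmM : m < M := Nat.lt_of_lt_of_le (Nat.lt_succ_self m) hm1
      obtain ⟨hsym, hpsd⟩ := ih (le_of_lt hmM)
      obtain ⟨f, hf⟩ := hnested m hmM
      have hsym1 : ∀ s t, v (m + 1) s t = v (m + 1) t s := by
        intro s t
        by_cases h : p (m + 1) s = p (m + 1) t
        · rw [hvrec m hmM s t h, hvrec m hmM t s h.symm]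
          have hpm : p m s = p m t := by rw [hf, hf, h]
          rw [hsym s t, hpm, dot_symm _ (hKsym m hmM hsym (p m t)) (b m t) (b m s)]
        · rw [hvzero m hmM s t h, hvzero m hmM t s (Ne.symm h)]
      refine ⟨hsym1, ?_⟩
      intro ι _ s c
      have hw : ∀ a b', (fun a' => p (m + 1) (s a')) a ≠ (fun a' => p (m + 1) (s a')) b' →
          v (m + 1) (s a) (s b') = 0 := fun a b' h => hvzero m hmM _ _ h
      rw [group_sum (fun a => p (m + 1) (s a)) c (fun a b' => v (m + 1) (s a) (s b')) hw]
      refine Finset.sum_nonneg fun B _ => ?_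
      set i₀ : I m := f B with hi₀
      set c' : ι → ℝ := fun a => if p (m + 1) (s a) = B then c a else 0 with hc'
      have hrepl : ∀ a b', c' a * c' b' * v (m + 1) (s a) (s b')
          = c' a * c' b' * (v m (s a) (s b') -
              (fun j => v m (s a) (Q m i₀ j)) ⬝ᵥ (G m i₀)⁻¹ *ᵥ
              (fun j => v m (s b') (Q m i₀ j))) := by
        intro a b'
        by_cases ha : p (m + 1) (s a) = B
        · by_cases hbb : p (m + 1) (s b') = B
          · have hab : p (m + 1) (s a) = p (m + 1) (s b') := ha.trans hbb.symm
            have hpa : p m (s a) = i₀ := by rw [hf (s a), ha, hi₀]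
            have hpb : p m (s b') = i₀ := by rw [hf (s b'), hbb, hi₀]
            rw [hvrec m hmM _ _ hab]
            have hbva : b m (s a) = fun j => v m (s a) (Q m i₀ j) := by
              funext j; rw [hb m hmM, hpa]
            have hbvb : b m (s b') = fun j => v m (s b') (Q m i₀ j) := by
              funext j; rw [hb m hmM, hpb]
            rw [hbva, hbvb, hpa, hK m hmM i₀]
          · simp [hc', hbb]
        · simp [hc', ha]
      rw [Finset.sum_congr rfl fun a _ => Finset.sum_congr rfl fun b' _ => hrepl a b']
      exact schur_psd (v m) hsym hpsd (Q m i₀) (G m i₀)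
        (fun j l => hG m hmM i₀ j l) (hGpd m hmM i₀) ι s c'
  obtain ⟨hsymM, hpsdM⟩ := main M le_rfl
  constructor
  · -- symmetry of CM
    intro s t
    rw [hCM s t, hCM t s, hsymM s t]
    congr 1
    refine Finset.sum_congr rfl fun m hm => ?_
    have hmM : m < M := Finset.mem_range.mp hm
    obtain ⟨hsm, -⟩ := main m (le_of_lt hmM)
    by_cases h : p m s = p m t
    · rw [if_pos h, if_pos h.symm, h,
        dot_symm _ (hKsym m hmM hsm (p m t)) (b m s) (b m t)]
    · rw [if_neg h, if_neg (Ne.symm h)]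
  · -- PSD of CM
    intro n s c
    have hsplit : ∑ i, ∑ j, c i * c j * CM (s i) (s j)
        = (∑ m ∈ Finset.range M, ∑ i, ∑ j, c i * c j *
            (if p m (s i) = p m (s j) then
              b m (s i) ⬝ᵥ (K m (p m (s i))).mulVec (b m (s j)) else 0))
          + ∑ i, ∑ j, c i * c j * v M (s i) (s j) := by
      have hswap : ∀ (F : Fin n → Fin n → ℕ → ℝ),
          ∑ i, ∑ j, ∑ m ∈ Finset.range M, F i j m
            = ∑ m ∈ Finset.range M, ∑ i, ∑ j, F i j m := by
        intro F
        calc ∑ i, ∑ j, ∑ m ∈ Finset.range M, F i j m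
            = ∑ i, ∑ m ∈ Finset.range M, ∑ j, F i j m :=
              Finset.sum_congr rfl fun i _ => Finset.sum_comm
          _ = ∑ m ∈ Finset.range M, ∑ i, ∑ j, F i j m := Finset.sum_comm
      calc ∑ i, ∑ j, c i * c j * CM (s i) (s j)
          = ∑ i, ∑ j, ((∑ m ∈ Finset.range M, c i * c j *
              (if p m (s i) = p m (s j) then
                b m (s i) ⬝ᵥ (K m (p m (s i))).mulVec (b m (s j)) else 0))
              + c i * c j * v M (s i) (s j)) :=
            Finset.sum_congr rfl fun i _ => Finset.sum_congr rfl fun j _ => by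
              rw [hCM, mul_add, Finset.mul_sum]
        _ = (∑ i, ∑ j, ∑ m ∈ Finset.range M, c i * c j *
              (if p m (s i) = p m (s j) then
                b m (s i) ⬝ᵥ (K m (p m (s i))).mulVec (b m (s j)) else 0))
            + ∑ i, ∑ j, c i * c j * v M (s i) (s j) := by
            rw [← Finset.sum_add_distrib]
            exact Finset.sum_congr rfl fun i _ => Finset.sum_add_distrib
        _ = _ := by rw [hswap]
    rw [hsplit]
    refine add_nonneg (Finset.sum_nonneg fun m hm => ?_) (hpsdM (Fin n) s c)
    have hmM : m < M := Finset.mem_range.mp hm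
    have hw : ∀ a b', (fun a' => p m (s a')) a ≠ (fun a' => p m (s a')) b' →
        (if p m (s a) = p m (s b') then
          b m (s a) ⬝ᵥ (K m (p m (s a))).mulVec (b m (s b')) else 0) = 0 :=
      fun a b' h => if_neg h
    rw [group_sum (fun a => p m (s a)) c _ hw]
    refine Finset.sum_nonneg fun B _ => ?_
    obtain ⟨hsm, -⟩ := main m (le_of_lt hmM)
    set c' : Fin n → ℝ := fun a => if p m (s a) = B then c a else 0 with hc'
    have hrepl : ∀ a b', c' a * c' b' *
        (if p m (s a) = p m (s b') then
          b m (s a) ⬝ᵥ (K m (p m (s a))).mulVec (b m (s b')) else 0)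
        = c' a * c' b' * ((fun j => v m (s a) (Q m B j)) ⬝ᵥ (G m B)⁻¹ *ᵥ
            (fun j => v m (s b') (Q m B j))) := by
      intro a b'
      by_cases ha : p m (s a) = B
      · by_cases hbb : p m (s b') = B
        · rw [if_pos (ha.trans hbb.symm)]
          have hbva : b m (s a) = fun j => v m (s a) (Q m B j) := by
            funext j; rw [hb m hmM, ha]
          have hbvb : b m (s b') = fun j => v m (s b') (Q m B j) := by
            funext j; rw [hb m hmM, hbb]
          rw [hbva, hbvb, ha, hK m hmM B]
        · simp [hc', hbb]
      · simp [hc', ha]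
    rw [Finset.sum_congr rfl fun a _ => Finset.sum_congr rfl fun b' _ => hrepl a b']
    exact psd_quad ((G m B)⁻¹) (hGpd m hmM B).inv.posSemidef (Fin n)
      (fun a j => v m (s a) (Q m B j)) c'
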